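/- Woodall's conjecture is true if and only if for every undirected graph G and every positive integer τ, every nowhere-zero τ-strongly-connected orientation vector of G (integral x with x_{e⁺}, x_{e⁻} ≥ 1 and x_{e⁺}+x_{e⁻}=τ for all edges e, and x(δ⁺(U)) ≥ τ for all nonempty proper U⊆V) can be decomposed into τ characteristic vectors of strongly connected orientations. -/

import Mathlib

open Finset

/-- The arcs leaving the vertex set `U`. -/
def outArcs {V A : Type*} [DecidableEq V] [Fintype A] (src tgt : A → V) (U : Finset V) :
    Finset A :=
  univ.filter fun a => src a ∈ U ∧ tgt a ∉ U

/-- The arcs entering the vertex set `U`. -/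
def inArcs {V A : Type*} [DecidableEq V] [Fintype A] (src tgt : A → V) (U : Finset V) :
    Finset A :=
  univ.filter fun a => tgt a ∈ U ∧ src a ∉ U

/-- `U` induces a dicut: nonempty, proper, no entering arcs (the dicut is `outArcs U`). -/
def IsDicut {V A : Type*} [Fintype V] [DecidableEq V] [Fintype A] (src tgt : A → V)
    (U : Finset V) : Prop :=
  U.Nonempty ∧ U ≠ univ ∧ inArcs src tgt U = ∅

/-- A dijoin: an arc set meeting every dicut. -/
def IsDijoin {V A : Type*} [Fintype V] [DecidableEq V] [Fintype A] [DecidableEq A] (src tgt : A → V)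
    (J : Finset A) : Prop :=
  ∀ U : Finset V, IsDicut src tgt U → (outArcs src tgt U ∩ J).Nonempty

/-- Source of an arc of the bidirected graph `E × Bool`: `(e, true) = e⁺` goes from `s e` to
`t e`, and `(e, false) = e⁻` goes from `t e` to `s e`. -/
def bsrc {V E : Type*} (s t : E → V) (p : E × Bool) : V := if p.2 then s p.1 else t p.1

/-- Target of an arc of the bidirected graph `E × Bool`. -/
def btgt {V E : Type*} (s t : E → V) (p : E × Bool) : V := if p.2 then t p.1 else s p.1

/-- A strongly connected orientation: a choice `O` of one direction per edge such that every
nonempty proper cut has a leaving arc. -/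
def IsSCO {V E : Type*} [Fintype V] [DecidableEq V] [Fintype E] (s t : E → V)
    (O : E → Bool) : Prop :=
  ∀ U : Finset V, U.Nonempty → U ≠ univ →
    ∃ e : E, (e, O e) ∈ outArcs (bsrc s t) (btgt s t) U

/-- Woodall's conjecture: every digraph in which all dicuts have size at least `τ` contains `τ`
pairwise arc-disjoint dijoins. -/
def WoodallConj : Prop :=
  ∀ (V A : Type) [Fintype V] [DecidableEq V] [Fintype A] [DecidableEq A],
    ∀ (src tgt : A → V) (τ : ℕ),
    (∀ U : Finset V, IsDicut src tgt U → τ ≤ (outArcs src tgt U).card) →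
    ∃ J : Fin τ → Finset A, (∀ i j, i ≠ j → Disjoint (J i) (J j)) ∧
      ∀ i, IsDijoin src tgt (J i)

/-- Every nowhere-zero `τ`-strongly-connected orientation vector of every undirected graph
decomposes into `τ` characteristic vectors of strongly connected orientations. -/
def NZSCODecompProp : Prop :=
  ∀ (V E : Type) [Fintype V] [DecidableEq V] [Fintype E] [DecidableEq E],
    ∀ (s t : E → V) (τ : ℕ), 0 < τ →
    ∀ x : E × Bool → ℤ, (∀ p, 1 ≤ x p) → (∀ e : E, x (e, true) + x (e, false) = (τ : ℤ)) →
    (∀ U : Finset V, U.Nonempty → U ≠ Finset.univ →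
      (τ : ℤ) ≤ ∑ p ∈ outArcs (bsrc s t) (btgt s t) U, x p) →
    ∃ O : Fin τ → (E → Bool), (∀ i, IsSCO s t (O i)) ∧
      ∀ p : E × Bool, x p = ∑ i, (if O i p.1 = p.2 then (1 : ℤ) else 0)

section Aux

open Finset

variable {α : Type*} [DecidableEq α]

lemma pigeon {τ : ℕ} (S : Finset α) (hS : S.card = τ)
    (J : Fin τ → Finset α) (hd : ∀ i j, i ≠ j → Disjoint (J i) (J j))
    (hne : ∀ i, (S ∩ J i).Nonempty) :
    (∀ i, (S ∩ J i).card = 1) ∧ ∀ a ∈ S, ∃ i, a ∈ J i := by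
  have hdisj' : ∀ i ∈ (univ : Finset (Fin τ)), ∀ j ∈ univ, i ≠ j →
      Disjoint (S ∩ J i) (S ∩ J j) := fun i _ j _ hij =>
    (hd i j hij).mono inter_subset_right inter_subset_right
  have hsub : (univ.biUnion fun i => S ∩ J i) ⊆ S := by
    intro a ha
    rcases mem_biUnion.mp ha with ⟨i, _, hai⟩
    exact mem_of_mem_inter_left hai
  have hcb := Finset.card_biUnion hdisj'
  have hle : ∑ i, (S ∩ J i).card ≤ τ := by
    calc ∑ i, (S ∩ J i).card = _ := hcb.symm
    _ ≤ S.card := card_le_card hsub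
    _ = τ := hS
  have hge : ∀ i ∈ (univ : Finset (Fin τ)), 1 ≤ (S ∩ J i).card :=
    fun i _ => card_pos.mpr (hne i)
  have hsum1 : τ ≤ ∑ i, (S ∩ J i).card := by
    calc τ = ∑ _i : Fin τ, 1 := by simp
    _ ≤ _ := sum_le_sum hge
  have heq : ∑ i, (S ∩ J i).card = τ := le_antisymm hle hsum1
  constructor
  · intro i
    by_contra h
    have h2 : 1 < (S ∩ J i).card := lt_of_le_of_ne (hge i (mem_univ i)) (Ne.symm h)
    have : (∑ _i : Fin τ, 1) < ∑ i, (S ∩ J i).card :=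
      Finset.sum_lt_sum hge ⟨i, mem_univ i, h2⟩
    simp [heq] at this
  · intro a ha
    have hcover : (univ.biUnion fun i => S ∩ J i) = S := by
      apply eq_of_subset_of_card_le hsub
      rw [hcb, heq, hS]
    rw [← hcover] at ha
    rcases mem_biUnion.mp ha with ⟨i, _, hai⟩
    exact ⟨i, mem_of_mem_inter_right hai⟩

end Aux

section Back

open Finset

lemma sum_bid {V E : Type*} [Fintype V] [DecidableEq V] [Fintype E] [DecidableEq E]
    (s t : E → V) (U : Finset V) (f : E × Bool → ℤ) :
    ∑ p ∈ outArcs (bsrc s t) (btgt s t) U, f p =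
      (∑ e ∈ outArcs s t U, f (e, true)) + ∑ e ∈ inArcs s t U, f (e, false) := by
  have hsplit : outArcs (bsrc s t) (btgt s t) U =
      (outArcs s t U).map ⟨fun e => (e, true), fun a b h => by simpa using h⟩ ∪
      (inArcs s t U).map ⟨fun e => (e, false), fun a b h => by simpa using h⟩ := by
    ext ⟨e, b⟩
    cases b <;> simp [outArcs, inArcs] <;> simp [bsrc, btgt]
    · constructor
      · intro h; exact Or.inr ⟨e, h, rfl⟩
      · rintro (⟨a, ha1, ha⟩ | ⟨a, ha1, ha⟩)
        · have ha' : (a, true) = (e, false) := ha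
          cases (Prod.mk.inj ha').2
        · have ha' : (a, false) = (e, false) := ha
          cases (Prod.mk.inj ha').1; exact ha1
    · constructor
      · intro h; exact Or.inl ⟨e, h, rfl⟩
      · rintro (⟨a, ha1, ha⟩ | ⟨a, ha1, ha⟩)
        · have ha' : (a, true) = (e, true) := ha
          cases (Prod.mk.inj ha').1; exact ha1
        · have ha' : (a, false) = (e, true) := ha
          cases (Prod.mk.inj ha').2
  rw [hsplit, Finset.sum_union, Finset.sum_map, Finset.sum_map]
  · rfl
  · rw [Finset.disjoint_left]
    rintro ⟨e, b⟩ h1 h2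
    simp at h1 h2
    rcases h1 with ⟨_, _, _, h1⟩
    rcases h2 with ⟨_, _, _, h2⟩

lemma backward_dir : NZSCODecompProp → WoodallConj := by
  intro h V A _ _ _ _ src tgt τ hdicut
  match τ with
  | 0 => exact ⟨fun i => i.elim0, fun i => i.elim0, fun i => i.elim0⟩
  | 1 =>
    refine ⟨fun _ => univ, ?_, ?_⟩
    · intro i j hij; exact absurd (Subsingleton.elim i j) hij
    · intro i U hU
      rw [inter_univ]
      exact card_pos.mp (lt_of_lt_of_le one_pos (hdicut U hU))
  | (n+2) =>
    set τ : ℕ := n + 2 with hτdef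
    set x : A × Bool → ℤ := fun p => if p.2 then 1 else (n + 1 : ℤ) with hxdef
    have hx1 : ∀ p, 1 ≤ x p := by
      rintro ⟨a, b⟩; cases b <;> simp [x]
    have hxsum : ∀ a : A, x (a, true) + x (a, false) = (τ : ℤ) := by
      intro a; simp [x, hτdef]; ring
    have hcut : ∀ U : Finset V, U.Nonempty → U ≠ Finset.univ →
        (τ : ℤ) ≤ ∑ p ∈ outArcs (bsrc src tgt) (btgt src tgt) U, x p := by
      intro U hUne hUuniv
      rw [sum_bid]
      have hout : ∑ e ∈ outArcs src tgt U, x (e, true) = ((outArcs src tgt U).card : ℤ) := by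
        simp [x]
      have hin : ∑ e ∈ inArcs src tgt U, x (e, false) =
          ((n : ℤ) + 1) * ((inArcs src tgt U).card : ℤ) := by
        have hc : ∀ e ∈ inArcs src tgt U, x (e, false) = (n : ℤ) + 1 := by
          intro e _; simp [x]
        rw [Finset.sum_congr rfl hc, Finset.sum_const, nsmul_eq_mul]
        ring
      rw [hout, hin]
      by_cases hI : inArcs src tgt U = ∅
      · have := hdicut U ⟨hUne, hUuniv, hI⟩
        have : (τ : ℤ) ≤ ((outArcs src tgt U).card : ℤ) := by exact_mod_cast this
        simp [hI]; push_cast at this ⊢; linarith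
      · have hI1 : 1 ≤ ((inArcs src tgt U).card : ℤ) := by
          have := Finset.card_pos.mpr (Finset.nonempty_of_ne_empty hI)
          exact_mod_cast this
        by_cases hO : outArcs src tgt U = ∅
        · have hcompl : IsDicut src tgt Uᶜ := by
            refine ⟨?_, ?_, ?_⟩
            · rw [Finset.nonempty_iff_ne_empty]
              simpa using hUuniv
            · intro hc
              obtain ⟨v, hv⟩ := hUne
              have : v ∈ Uᶜ := hc ▸ mem_univ v
              simp at this
              exact this hv
            · rw [← hO]
              ext a
              simp [inArcs, outArcs, Finset.mem_compl]
              tauto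
          have hcompl_out : outArcs src tgt Uᶜ = inArcs src tgt U := by
            ext a
            simp [inArcs, outArcs, Finset.mem_compl]
            tauto
          have := hdicut Uᶜ hcompl
          rw [hcompl_out] at this
          have hI2 : (τ : ℤ) ≤ ((inArcs src tgt U).card : ℤ) := by exact_mod_cast this
          have h0 : (0 : ℤ) ≤ ((outArcs src tgt U).card : ℤ) := by exact_mod_cast Nat.zero_le _
          push_cast at hI2 ⊢
          nlinarith
        · have hO1 : 1 ≤ ((outArcs src tgt U).card : ℤ) := by
            have := Finset.card_pos.mpr (Finset.nonempty_of_ne_empty hO)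
            exact_mod_cast this
          push_cast; nlinarith
    obtain ⟨O, hSCO, hdecomp⟩ := h V A src tgt τ (by omega) x hx1 hxsum hcut
    refine ⟨fun i => univ.filter fun a => O i a = true, ?_, ?_⟩
    · intro i j hij
      rw [Finset.disjoint_left]
      intro a hai haj
      simp at hai haj
      have hone := hdecomp (a, true)
      rw [show x (a, true) = 1 from rfl] at hone
      have h2 : (2 : ℤ) ≤ ∑ k, (if O k (a, true).1 = (a, true).2 then (1 : ℤ) else 0) := by
        calc (2 : ℤ) = ∑ k ∈ ({i, j} : Finset (Fin τ)),
            (if O k (a, true).1 = (a, true).2 then (1 : ℤ) else 0) := by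
              rw [Finset.sum_pair hij]; simp [hai, haj]
        _ ≤ _ := Finset.sum_le_sum_of_subset_of_nonneg (subset_univ _)
            (fun k _ _ => by positivity)
      linarith
    · intro i U hU
      obtain ⟨e, he⟩ := hSCO i U hU.1 hU.2.1
      simp only [outArcs, mem_filter, mem_univ, true_and] at he
      cases hOe : O i e with
      | false =>
        rw [hOe] at he
        simp [bsrc, btgt] at he
        have : e ∈ inArcs src tgt U := by simp [inArcs, he.1, he.2]
        rw [hU.2.2] at this
        simp at this
      | true =>
        rw [hOe] at he
        simp [bsrc, btgt] at he
        refine ⟨e, ?_⟩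
        simp [outArcs, he.1, he.2, hOe]

end Back

section Fwd

open Finset

lemma forward_dir : WoodallConj → NZSCODecompProp := by
  intro hW V E _ _ _ _ s t τ hτ x hx1 hxsum hcut
  classical
  let A := (p : E × Bool) × Fin (x p).toNat
  let asrc : A → V ⊕ E := fun a => Sum.inl (bsrc s t a.1)
  let atgt : A → V ⊕ E := fun a => Sum.inr a.1.1
  have hpos : ∀ p : E × Bool, 0 < (x p).toNat := fun p => by
    have := hx1 p; omega
  have htau : ∀ e : E, (x (e, true)).toNat + (x (e, false)).toNat = τ := fun e => by
    have h1 := hxsum e; have h2 := hx1 (e, true); have h3 := hx1 (e, false); omega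
  -- membership in U' of edge-vertices forces both endpoints in
  have hbound : ∀ U' : Finset (V ⊕ E), IsDicut asrc atgt U' →
      τ ≤ (outArcs asrc atgt U').card := by
    rintro U' ⟨hne, hproper, hin⟩
    have hWmem : ∀ e : E, Sum.inr e ∈ U' →
        Sum.inl (s e) ∈ U' ∧ Sum.inl (t e) ∈ U' := by
      intro e he
      constructor
      · by_contra hcon
        have : (⟨(e, true), ⟨0, hpos _⟩⟩ : A) ∈ inArcs asrc atgt U' := by
          rw [inArcs, Finset.mem_filter]; simp [asrc, atgt, bsrc, he, hcon]
        rw [hin] at this; simp at this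
      · by_contra hcon
        have : (⟨(e, false), ⟨0, hpos _⟩⟩ : A) ∈ inArcs asrc atgt U' := by
          rw [inArcs, Finset.mem_filter]; simp [asrc, atgt, bsrc, he, hcon]
        rw [hin] at this; simp at this
    have hcard : (outArcs asrc atgt U').card =
        ∑ p ∈ univ.filter (fun p : E × Bool =>
          Sum.inl (bsrc s t p) ∈ U' ∧ Sum.inr p.1 ∉ U'), (x p).toNat := by
      rw [outArcs, Finset.card_filter, ← Finset.univ_sigma_univ, Finset.sum_sigma,
        Finset.sum_filter]
      apply Finset.sum_congr rfl
      intro p _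
      by_cases hq : Sum.inl (bsrc s t p) ∈ U' ∧ Sum.inr p.1 ∉ U'
      · rw [if_pos hq]
        have hterm : ∀ k ∈ (univ : Finset (Fin (x p).toNat)),
            (if asrc ⟨p, k⟩ ∈ U' ∧ atgt ⟨p, k⟩ ∉ U' then 1 else 0) = 1 :=
          fun k _ => if_pos hq
        rw [Finset.sum_congr rfl hterm]
        simp
      · rw [if_neg hq]
        have hterm : ∀ k ∈ (univ : Finset (Fin (x p).toNat)),
            (if asrc ⟨p, k⟩ ∈ U' ∧ atgt ⟨p, k⟩ ∉ U' then 1 else 0) = 0 :=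
          fun k _ => if_neg hq
        rw [Finset.sum_congr rfl hterm]
        simp
    rw [hcard]
    by_cases hUuniv : ∀ v : V, Sum.inl v ∈ U'
    · -- all of V inside, so some edge-vertex is out, all τ of its arcs leave
      have : ∃ e : E, Sum.inr e ∉ U' := by
        by_contra hcon
        push_neg at hcon
        apply hproper
        ext z
        simp only [mem_univ, iff_true]
        cases z with
        | inl v => exact hUuniv v
        | inr e => exact hcon e
      obtain ⟨e₀, he₀⟩ := this
      have hpair : ({(e₀, true), (e₀, false)} : Finset (E × Bool)) ⊆
          univ.filter (fun p : E × Bool =>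
            Sum.inl (bsrc s t p) ∈ U' ∧ Sum.inr p.1 ∉ U') := by
        intro p hp
        simp at hp
        rcases hp with hp | hp <;> subst hp <;>
          simp [bsrc, hUuniv, he₀]
      calc τ = (x (e₀, true)).toNat + (x (e₀, false)).toNat := (htau e₀).symm
      _ = ∑ p ∈ ({(e₀, true), (e₀, false)} : Finset (E × Bool)), (x p).toNat := by
          rw [Finset.sum_pair (by simp)]
      _ ≤ _ := Finset.sum_le_sum_of_subset hpair
    · push_neg at hUuniv
      obtain ⟨v₀, hv₀⟩ := hUuniv
      set U : Finset V := univ.filter (fun v => Sum.inl v ∈ U') with hUdef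
      have hUne : U.Nonempty := by
        obtain ⟨z, hz⟩ := hne
        cases z with
        | inl v => exact ⟨v, by simp [U, hz]⟩
        | inr e => exact ⟨s e, by simp [U, (hWmem e hz).1]⟩
      have hUproper : U ≠ univ := by
        intro hcon
        have : v₀ ∈ U := hcon ▸ mem_univ v₀
        simp [U] at this
        exact hv₀ this
      have hsubset : outArcs (bsrc s t) (btgt s t) U ⊆
          univ.filter (fun p : E × Bool =>
            Sum.inl (bsrc s t p) ∈ U' ∧ Sum.inr p.1 ∉ U') := by
        intro p hp
        simp only [outArcs, mem_filter, mem_univ, true_and] at hp ⊢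
        have h1 : Sum.inl (bsrc s t p) ∈ U' := by
          have := hp.1; simp [U] at this; exact this
        refine ⟨h1, ?_⟩
        intro hcon
        have hmem := hWmem p.1 hcon
        have : btgt s t p ∈ U := by
          rcases p with ⟨e, b⟩
          cases b <;> simp [btgt, U, hmem.1, hmem.2]
        exact hp.2 this
      have hint : (τ : ℤ) ≤ ∑ p ∈ univ.filter (fun p : E × Bool =>
          Sum.inl (bsrc s t p) ∈ U' ∧ Sum.inr p.1 ∉ U'), x p := by
        calc (τ : ℤ) ≤ ∑ p ∈ outArcs (bsrc s t) (btgt s t) U, x p := hcut U hUne hUproper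
        _ ≤ _ := Finset.sum_le_sum_of_subset_of_nonneg hsubset
            (fun p _ _ => by linarith [hx1 p])
      have hcast : ∑ p ∈ univ.filter (fun p : E × Bool =>
          Sum.inl (bsrc s t p) ∈ U' ∧ Sum.inr p.1 ∉ U'), x p =
          ((∑ p ∈ univ.filter (fun p : E × Bool =>
          Sum.inl (bsrc s t p) ∈ U' ∧ Sum.inr p.1 ∉ U'), (x p).toNat : ℕ) : ℤ) := by
        push_cast
        apply Finset.sum_congr rfl
        intro p _
        rw [Int.toNat_of_nonneg (by linarith [hx1 p])]
      rw [hcast] at hint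
      exact_mod_cast hint
  obtain ⟨J, hdisj, hdij⟩ := hW (V ⊕ E) A asrc atgt τ hbound
  -- per-edge arc sets
  set S : E → Finset A := fun e => univ.filter (fun a : A => a.1.1 = e) with hSdef
  set T : E → Bool → Finset A := fun e b => univ.filter (fun a : A => a.1 = (e, b))
    with hTdef
  have hTcard : ∀ e b, (T e b).card = (x (e, b)).toNat := by
    intro e b
    have : T e b = (univ : Finset (Fin (x (e, b)).toNat)).map
        ⟨fun k => ⟨(e, b), k⟩, fun k k' h => by
          simpa using sigma_mk_injective h⟩ := by
      ext a
      simp only [T, mem_filter, mem_univ, true_and, Finset.mem_map,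
        Function.Embedding.coeFn_mk]
      constructor
      · rintro h
        rcases a with ⟨p, k⟩
        dsimp at h
        subst h
        exact ⟨k, rfl⟩
      · rintro ⟨k', rfl⟩
        rfl
    rw [this, Finset.card_map, Finset.card_univ, Fintype.card_fin]
  have hScard : ∀ e, (S e).card = τ := by
    intro e
    have hunion : S e = T e true ∪ T e false := by
      ext ⟨⟨e', b⟩, k⟩
      cases b <;> simp [S, T, Prod.ext_iff]
    have hdisjT : Disjoint (T e true) (T e false) := by
      rw [Finset.disjoint_left]
      rintro ⟨p, k⟩ h1 h2
      simp [T] at h1 h2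
      rw [h1] at h2
      simp at h2
    rw [hunion, Finset.card_union_of_disjoint hdisjT, hTcard, hTcard, htau]
  have hSe_dicut : ∀ e : E, IsDicut asrc atgt (univ.erase (Sum.inr e)) ∧
      outArcs asrc atgt (univ.erase (Sum.inr e)) = S e := by
    intro e
    refine ⟨⟨⟨Sum.inl (s e), by simp⟩, ?_, ?_⟩, ?_⟩
    · intro hcon
      have : Sum.inr e ∈ univ.erase (Sum.inr e) := hcon ▸ mem_univ _
      simp at this
    · ext a
      simp [inArcs, asrc, atgt]
    · ext a
      simp [outArcs, S, asrc, atgt]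
  have hmeet : ∀ i e, (S e ∩ J i).Nonempty := by
    intro i e
    have := hdij i _ (hSe_dicut e).1
    rwa [(hSe_dicut e).2] at this
  have hpig : ∀ e, (∀ i, (S e ∩ J i).card = 1) ∧ ∀ a ∈ S e, ∃ i, a ∈ J i :=
    fun e => pigeon (S e) (hScard e) J hdisj (fun i => hmeet i e)
  -- extract orientations
  have hOexists : ∀ i (e : E), ∃ b : Bool, ∃ k : Fin (x (e, b)).toNat,
      (⟨(e, b), k⟩ : A) ∈ J i := by
    intro i e
    obtain ⟨a, ha⟩ := hmeet i e
    rw [Finset.mem_inter] at ha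
    rcases a with ⟨⟨e', b⟩, k⟩
    have he' : e' = e := by simpa [S] using ha.1
    subst he'
    exact ⟨b, k, ha.2⟩
  choose O K hOK using hOexists
  have harcS : ∀ i e, (⟨(e, O i e), K i e⟩ : A) ∈ S e := by
    intro i e; simp [S]
  have huniq : ∀ i e (a : A), a ∈ S e → a ∈ J i →
      a = ⟨(e, O i e), K i e⟩ := by
    intro i e a haS haJ
    obtain ⟨c, hc⟩ := Finset.card_eq_one.mp ((hpig e).1 i)
    have h1 : a ∈ ({c} : Finset A) := hc ▸ Finset.mem_inter.mpr ⟨haS, haJ⟩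
    have h2 : (⟨(e, O i e), K i e⟩ : A) ∈ ({c} : Finset A) :=
      hc ▸ Finset.mem_inter.mpr ⟨harcS i e, hOK i e⟩
    simp at h1 h2
    rw [h1, h2]
  have hcount : ∀ (e : E) (b : Bool),
      (univ.filter fun i : Fin τ => O i e = b).card = (x (e, b)).toNat := by
    intro e b
    rw [← hTcard e b]
    apply Finset.card_bij (fun i _ => (⟨(e, O i e), K i e⟩ : A))
    · intro i hi
      simp only [mem_filter, mem_univ, true_and] at hi
      simp [T, hi]
    · intro i _ j _ hij
      by_contra hne
      have hd := hdisj i j hne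
      rw [Finset.disjoint_left] at hd
      exact hd (hOK i e) (hij ▸ hOK j e)
    · intro a ha
      have haS : a ∈ S e := by
        simp only [T, mem_filter, mem_univ, true_and] at ha
        simp [S, ha]
      obtain ⟨i, hi⟩ := (hpig e).2 a haS
      have := huniq i e a haS hi
      refine ⟨i, ?_, this.symm⟩
      simp only [mem_filter, mem_univ, true_and]
      simp only [T, mem_filter, mem_univ, true_and] at ha
      rw [this] at ha
      have h2 : (e, O i e) = (e, b) := ha
      exact (Prod.ext_iff.mp h2).2
  refine ⟨O, ?_, ?_⟩
  · -- each O i is an SCO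
    intro i U hUne hUuniv
    set W : Finset E := univ.filter (fun e => s e ∈ U ∧ t e ∈ U) with hWdef
    set U' : Finset (V ⊕ E) := U.image Sum.inl ∪ W.image Sum.inr with hU'def
    have hU'dicut : IsDicut asrc atgt U' := by
      refine ⟨?_, ?_, ?_⟩
      · obtain ⟨v, hv⟩ := hUne
        exact ⟨Sum.inl v, by simp [U', hv]⟩
      · have hv : ∃ v, v ∉ U := by
          by_contra hc
          push_neg at hc
          exact hUuniv (Finset.eq_univ_of_forall hc)
        obtain ⟨v₁, hv₁⟩ := hv
        intro hcon
        have hmem : Sum.inl v₁ ∈ U' := hcon ▸ mem_univ _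
        simp only [U', Finset.mem_union, Finset.mem_image] at hmem
        rcases hmem with ⟨v, hv, h⟩ | ⟨e, _, h⟩
        · have : v = v₁ := by injection h
          exact hv₁ (this ▸ hv)
        · exact absurd h (by simp)
      · ext a
        simp only [inArcs, mem_filter, mem_univ, true_and, Finset.notMem_empty,
          iff_false, not_and, not_not, atgt, asrc, U', Finset.mem_union, Finset.mem_image]
        intro htgt
        rcases htgt with ⟨_, _, h⟩ | ⟨e, he, h⟩
        · exact absurd h (by simp)
        · have he' : e = a.1.1 := by injection h
          subst he'
          simp only [W, mem_filter, mem_univ, true_and] at he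
          left
          refine ⟨bsrc s t a.1, ?_, rfl⟩
          rcases a with ⟨⟨e, b⟩, k⟩
          cases b <;> simp [bsrc, he.1, he.2]
    obtain ⟨a, ha⟩ := hdij i U' hU'dicut
    rw [Finset.mem_inter] at ha
    obtain ⟨haout, haJ⟩ := ha
    simp only [outArcs, mem_filter, mem_univ, true_and, asrc, atgt] at haout
    have hsrcU : bsrc s t a.1 ∈ U := by
      have := haout.1
      simp only [U', Finset.mem_union, Finset.mem_image] at this
      rcases this with ⟨v, hv, h⟩ | ⟨e, _, h⟩
      · have : v = bsrc s t a.1 := by injection h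
        exact this ▸ hv
      · exact absurd h (by simp)
    have hnW : a.1.1 ∉ W := by
      intro hcon
      apply haout.2
      simp only [U', Finset.mem_union, Finset.mem_image]
      exact Or.inr ⟨a.1.1, hcon, rfl⟩
    have htgtU : btgt s t a.1 ∉ U := by
      intro hcon
      apply hnW
      simp only [W, mem_filter, mem_univ, true_and]
      rcases a with ⟨⟨e, b⟩, k⟩
      cases b
      · simp [bsrc, btgt] at hsrcU hcon
        exact ⟨hcon, hsrcU⟩
      · simp [bsrc, btgt] at hsrcU hcon
        exact ⟨hsrcU, hcon⟩
    have haS : a ∈ S a.1.1 := by simp [S]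
    have heqarc := huniq i a.1.1 a haS haJ
    have hOeq : O i a.1.1 = a.1.2 := by
      have := congrArg (fun z : A => z.1.2) heqarc
      simpa using this.symm
    refine ⟨a.1.1, ?_⟩
    rw [hOeq]
    simp only [outArcs, mem_filter, mem_univ, true_and]
    exact ⟨hsrcU, htgtU⟩
  · -- decomposition equality
    rintro ⟨e, b⟩
    have : ∑ i, (if O i (e, b).1 = (e, b).2 then (1 : ℤ) else 0) =
        ((univ.filter fun i : Fin τ => O i e = b).card : ℤ) := by
      simp [Finset.sum_boole]
    rw [this, hcount e b, Int.toNat_of_nonneg (by linarith [hx1 (e, b)])]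

end Fwd

/-- Woodall's conjecture is equivalent to: every nowhere-zero `τ`-SCO decomposes into
`τ` SCOs. -/
theorem woodall_iff_nz_sco_decomp : WoodallConj ↔ NZSCODecompProp :=
  ⟨forward_dir, backward_dir⟩
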